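/- Let Y be a closed subspace of a real Banach space X. If Y has property-(wU) in X (every norm-attaining functional on Y has a unique norm-preserving extension to X), then for every x* ∈ X* attaining its norm at some point of S_Y, the zero functional is the unique best approximation to x* from Y⊥. -/

import Mathlib

open NormedSpace Metric Set

namespace Paper

variable {X : Type*} [NormedAddCommGroup X] [NormedSpace ℝ X]

/-- The restriction of a continuous linear functional to a subspace. -/
noncomputable def restr (Y : Submodule ℝ X) (f : StrongDual ℝ X) : StrongDual ℝ ↥Y :=
  f.comp Y.subtypeL

/-- The annihilator `Y⊥` of a subspace `Y` in the dual. -/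
def ann (Y : Submodule ℝ X) : Set (StrongDual ℝ X) := {f | ∀ y ∈ Y, f y = 0}

/-- The set of norm-preserving (Hahn–Banach) extensions of `g : Y* ` to `X`. -/
def HB (Y : Submodule ℝ X) (g : StrongDual ℝ ↥Y) : Set (StrongDual ℝ X) :=
  {f | (∀ y : Y, f (y : X) = g y) ∧ ‖f‖ = ‖g‖}

/-- Best approximations to `x` from a set `A`. -/
def bestApprox {E : Type*} [NormedAddCommGroup E] (A : Set E) (x : E) : Set E :=
  {z ∈ A | ‖x - z‖ = infDist x A}

/-- Property-(U): every functional on `Y` has a unique norm-preserving extension to `X`. -/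
def propU (Y : Submodule ℝ X) : Prop :=
  ∀ g : StrongDual ℝ ↥Y, ∃! f : StrongDual ℝ X, f ∈ HB Y g

/-- `Y# `: the set of functionals whose norm equals the norm of their restriction to `Y`. -/
def sharp (Y : Submodule ℝ X) : Set (StrongDual ℝ X) := {f | ‖f‖ = ‖restr Y f‖}

/-- Property-(HB), stated via the decomposition `X* = Y# ⊕ Y⊥`. -/
def propHB (Y : Submodule ℝ X) : Prop :=
  (∀ f ∈ sharp Y, ∀ g ∈ sharp Y, f + g ∈ sharp Y) ∧
  (∀ (c : ℝ), ∀ f ∈ sharp Y, c • f ∈ sharp Y) ∧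
  (∀ f : StrongDual ℝ X, ∃ g ∈ sharp Y, ∃ h ∈ ann Y, f = g + h) ∧
  (∀ g ∈ sharp Y, ∀ h ∈ ann Y, h ≠ 0 → ‖g‖ < ‖g + h‖ ∧ ‖h‖ ≤ ‖g + h‖)

end Paper

open Paper

/-- if `Y` has property-(wU) in `X`, then for every `x* ∈ X*` attaining its norm
at a point of `S_Y`, the zero functional is its unique best approximation from `Y⊥`. -/
theorem stmt1 {X : Type*} [NormedAddCommGroup X] [NormedSpace ℝ X] [CompleteSpace X]
    (Y : Submodule ℝ X) (hYc : IsClosed (Y : Set X))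
    (h : ∀ g : StrongDual ℝ ↥Y, (∃ y : Y, ‖(y : X)‖ = 1 ∧ g y = ‖g‖) →
      ∃! f : StrongDual ℝ X, f ∈ HB Y g) :
    ∀ f : StrongDual ℝ X, (∃ y : Y, ‖(y : X)‖ = 1 ∧ f (y : X) = ‖f‖) →
      bestApprox (ann Y) f = {0} := by
  rintro f ⟨y₀, hy₀, hfy₀⟩
  set g := restr Y f with hg
  have hgle : ‖g‖ ≤ ‖f‖ := by
    apply ContinuousLinearMap.opNorm_le_bound _ (norm_nonneg f)
    intro y
    exact (f.le_opNorm (y : X))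
  have hge : ‖f‖ ≤ ‖g‖ := by
    calc ‖f‖ = g y₀ := hfy₀.symm
      _ ≤ ‖g y₀‖ := le_abs_self _
      _ ≤ ‖g‖ * ‖(y₀ : X)‖ := g.le_opNorm _
      _ = ‖g‖ := by rw [hy₀, mul_one]
  have hnorm : ‖g‖ = ‖f‖ := le_antisymm hgle hge
  obtain ⟨F, hF, hFuniq⟩ := h g ⟨y₀, hy₀, by show f y₀ = ‖g‖; rw [hnorm]; exact hfy₀⟩
  have hzero : (0 : StrongDual ℝ X) ∈ ann Y := fun y _ => rfl
  have hinf : infDist f (ann Y) = ‖f‖ := by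
    apply le_antisymm
    · have := infDist_le_dist_of_mem (x := f) hzero
      simpa [dist_eq_norm] using this
    · rw [Metric.infDist_eq_iInf]
      haveI : Nonempty ↑(ann Y) := ⟨⟨0, hzero⟩⟩
      apply le_ciInf
      rintro ⟨z, hz⟩
      have hzy : z (y₀ : X) = 0 := hz y₀ y₀.2
      calc ‖f‖ = (f - z) (y₀ : X) := by
            simp [ContinuousLinearMap.sub_apply, hzy, hfy₀]
        _ ≤ ‖(f - z) (y₀ : X)‖ := le_abs_self _
        _ ≤ ‖f - z‖ * ‖(y₀ : X)‖ := (f - z).le_opNorm _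
        _ = dist f z := by rw [hy₀, mul_one, dist_eq_norm]
  have hfHB : f ∈ HB Y g := ⟨fun y => rfl, hnorm.symm⟩
  ext z
  simp only [bestApprox, Set.mem_setOf_eq, Set.mem_singleton_iff]
  constructor
  · rintro ⟨hzA, hzd⟩
    have hfz : f - z ∈ HB Y g := by
      constructor
      · intro y
        have : z (y : X) = 0 := hzA y y.2
        simp [ContinuousLinearMap.sub_apply, this]
        rfl
      · rw [hnorm, ← hinf]; exact hzd
    have := (hFuniq _ hfz).trans (hFuniq _ hfHB).symm
    have := sub_eq_self.mp this
    exact this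
  · rintro rfl
    refine ⟨hzero, ?_⟩
    simp [hinf]
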